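/- Let 𝔭₁₂, 𝔭₂₁, 𝔮₁₂, 𝔮₂₁ : ℝ → Mat_n(ℂ) satisfy 𝔮₁₂' = 𝔭₁₂, 𝔮₂₁' = 𝔭₂₁, 𝔭₁₂' = 2𝔮₁₂𝔮₂₁𝔮₁₂ + t𝔮₁₂, 𝔭₂₁' = 2𝔮₂₁𝔮₁₂𝔮₂₁ + t𝔮₂₁. Then the matrix m₂ = 𝔭₂₁𝔮₁₂ − 𝔮₂₁𝔭₁₂ is constant in t. -/

import Mathlib

/-- Entrywise derivative of a matrix-valued function of a real variable. -/
def MHasDeriv {n : ℕ} (f f' : ℝ → Matrix (Fin n) (Fin n) ℂ) : Prop :=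
  ∀ (t : ℝ) (i j : Fin n), HasDerivAt (fun s : ℝ => f s i j) (f' t i j) t

/-- Entrywise derivative of a product of matrix-valued functions. -/
lemma MHasDeriv.mul_entry {n : ℕ} {f g f' g' : ℝ → Matrix (Fin n) (Fin n) ℂ}
    (hf : MHasDeriv f f') (hg : MHasDeriv g g') (t : ℝ) (i j : Fin n) :
    HasDerivAt (fun s : ℝ => (f s * g s) i j) ((f' t * g t + f t * g' t) i j) t := by
  have h := HasDerivAt.fun_sum (u := Finset.univ)
    (fun k _ => ((hf t i k).fun_mul (hg t k j)))
  simp only [Matrix.mul_apply, Matrix.add_apply]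
  rw [Finset.sum_add_distrib] at h
  exact h

/-- On the block-antidiagonal invariant subset of 2n×2n matrix Painlevé II with θ = 0,
the matrix `m₂ = 𝔭₂₁𝔮₁₂ − 𝔮₂₁𝔭₁₂` is an integral of motion. -/
theorem matrixPII_block_integral (n : ℕ)
    (q12 q21 p12 p21 : ℝ → Matrix (Fin n) (Fin n) ℂ)
    (h1 : MHasDeriv q12 p12) (h2 : MHasDeriv q21 p21)
    (h3 : MHasDeriv p12 fun t => (2 : ℂ) • (q12 t * q21 t * q12 t) + (t : ℂ) • q12 t)
    (h4 : MHasDeriv p21 fun t => (2 : ℂ) • (q21 t * q12 t * q21 t) + (t : ℂ) • q21 t) :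
    ∀ t₁ t₂ : ℝ,
      p21 t₁ * q12 t₁ - q21 t₁ * p12 t₁ = p21 t₂ * q12 t₂ - q21 t₂ * p12 t₂ := by
  have key : ∀ (t : ℝ) (i j : Fin n),
      HasDerivAt (fun s : ℝ => (p21 s * q12 s - q21 s * p12 s) i j) 0 t := by
    intro t i j
    have hA := MHasDeriv.mul_entry h4 h1 t i j
    have hB := MHasDeriv.mul_entry h2 h3 t i j
    have h := hA.fun_sub hB
    have hz :
        ((((2 : ℂ) • (q21 t * q12 t * q21 t) + (t : ℂ) • q21 t) * q12 t
            + p21 t * p12 t) i j)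
          - ((p21 t * p12 t
            + q21 t * ((2 : ℂ) • (q12 t * q21 t * q12 t) + (t : ℂ) • q12 t)) i j) = 0 := by
      rw [← Matrix.sub_apply]
      have : (((2 : ℂ) • (q21 t * q12 t * q21 t) + (t : ℂ) • q21 t) * q12 t
            + p21 t * p12 t)
          - (p21 t * p12 t
            + q21 t * ((2 : ℂ) • (q12 t * q21 t * q12 t) + (t : ℂ) • q12 t)) = 0 := by
        rw [Matrix.add_mul, Matrix.mul_add, Matrix.smul_mul, Matrix.smul_mul,
          Matrix.mul_smul, Matrix.mul_smul]
        simp only [mul_assoc]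
        abel
      rw [this, Matrix.zero_apply]
    have key' := h
    rw [hz] at key'
    simpa only [Matrix.sub_apply] using key'
  intro t₁ t₂
  ext i j
  have hdiff : Differentiable ℝ (fun s : ℝ => (p21 s * q12 s - q21 s * p12 s) i j) :=
    fun t => (key t i j).differentiableAt
  have hderiv : ∀ t : ℝ, deriv (fun s : ℝ => (p21 s * q12 s - q21 s * p12 s) i j) t = 0 :=
    fun t => (key t i j).deriv
  have := is_const_of_deriv_eq_zero hdiff hderiv t₁ t₂
  simpa [Matrix.sub_apply] using this
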